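/- Let D be an integral domain, T an overring of D, and ⋆ a semistar operation on D. Then the map ⋆_ι defined on nonzero T-submodules E of K by E^{⋆_ι} := E^⋆ is a semistar operation on T; if ⋆ is of finite type, so is ⋆_ι; if T = D^⋆, then ⋆_ι is a (semi)star operation on D^⋆ (i.e., (D^⋆)^{⋆_ι} = D^⋆); and if ⋆ is stable, so is ⋆_ι. -/
import Mathlib


open Submodule

structure SemistarOperation (R K : Type*) [CommRing R] [Field K] [Algebra R K] where
  star : Submodule R K → Submodule R K
  star_smul : ∀ (x : K), x ≠ 0 → ∀ E : Submodule R K, E ≠ ⊥ →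
    star (E.map (LinearMap.mul R K x)) = (star E).map (LinearMap.mul R K x)
  star_mono : ∀ E F : Submodule R K, E ≠ ⊥ → F ≠ ⊥ → E ≤ F → star E ≤ star F
  le_star : ∀ E : Submodule R K, E ≠ ⊥ → E ≤ star E
  star_idem : ∀ E : Submodule R K, E ≠ ⊥ → star (star E) = star E

variable {R K : Type*} [CommRing R] [Field K] [Algebra R K]

def starF (s : SemistarOperation R K) (E : Submodule R K) : Submodule R K :=
  ⨆ (F : Submodule R K) (_ : F ≤ E ∧ F ≠ ⊥ ∧ F.FG), s.star F

def IsFiniteTypeOp (s : SemistarOperation R K) : Prop :=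
  ∀ E : Submodule R K, E ≠ ⊥ → s.star E = starF s E

def IsStableOp (s : SemistarOperation R K) : Prop :=
  ∀ E F : Submodule R K, E ≠ ⊥ → F ≠ ⊥ → E ⊓ F ≠ ⊥ → s.star (E ⊓ F) = s.star E ⊓ s.star F

def IsFracIdeal (I : Submodule R K) : Prop :=
  I ≠ ⊥ ∧ ∃ d : R, d ≠ 0 ∧ ∀ x ∈ I, algebraMap R K d * x ∈ (1 : Submodule R K)

def IsStarInv (s : SemistarOperation R K) (I : Submodule R K) : Prop :=
  s.star (I * ((1 : Submodule R K) / I)) = s.star 1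

def IsQuasiStarInv (s : SemistarOperation R K) (I : Submodule R K) : Prop :=
  s.star (I * (s.star 1 / I)) = s.star 1

def QuasiStarIdeal (f : Submodule R K → Submodule R K) (I : Ideal R) : Prop :=
  I ≠ ⊥ ∧ (f (Submodule.map (Algebra.linearMap R K) I)).comap (Algebra.linearMap R K) = I

def QuasiStarMax (f : Submodule R K → Submodule R K) (I : Ideal R) : Prop :=
  QuasiStarIdeal f I ∧ I ≠ ⊤ ∧ ∀ J : Ideal R, QuasiStarIdeal f J → J ≠ ⊤ → I ≤ J → I = J

def HStarDomain (s : SemistarOperation R K) : Prop :=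
  ∀ I : Ideal R, I ≠ ⊥ → s.star (Submodule.map (Algebra.linearMap R K) I) = s.star 1 →
    ∃ J : Ideal R, J ≠ ⊥ ∧ J.FG ∧ J ≤ I ∧ s.star (Submodule.map (Algebra.linearMap R K) J) = s.star 1

def locAt (Q : Ideal R) : Submodule R K :=
  span R {x : K | ∃ s : R, s ∉ Q ∧ x * algebraMap R K s = 1}

def starTilde (s : SemistarOperation R K) (E : Submodule R K) : Submodule R K :=
  ⨅ (Q : Ideal R) (_ : QuasiStarMax (starF s) Q), E * locAt Q

section Induced

variable {D K : Type*} [CommRing D] [IsDomain D] [Field K] [Algebra D K] [IsFractionRing D K]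

namespace InducedStarAux

variable (T : Subalgebra D K) (s : SemistarOperation D K)

/-- multiplication by a nonzero element maps a T-submodule (as D-module) into itself -/
lemma map_mul_le (E : Submodule ↥T K) (t : ↥T) :
    (E.restrictScalars D).map (LinearMap.mul D K (t : K)) ≤ E.restrictScalars D := by
  rintro x hx
  obtain ⟨e, he, rfl⟩ := Submodule.mem_map.mp hx
  have := E.smul_mem t he
  simpa [Subalgebra.smul_def] using this

lemma map_mul_ne_bot {E : Submodule D K} (hE : E ≠ ⊥) {x : K} (hx : x ≠ 0) :
    E.map (LinearMap.mul D K x) ≠ ⊥ := by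
  obtain ⟨e, he, he0⟩ := Submodule.exists_mem_ne_zero_of_ne_bot hE
  intro h
  have : x * e ∈ E.map (LinearMap.mul D K x) := Submodule.mem_map.mpr ⟨e, he, rfl⟩
  rw [h, Submodule.mem_bot] at this
  exact (mul_ne_zero hx he0) this

open Classical in
noncomputable def inducedStar (E : Submodule ↥T K) : Submodule ↥T K :=
  if hE : E = ⊥ then ⊥ else
  { carrier := s.star (E.restrictScalars D)
    add_mem' := fun ha hb => (s.star _).add_mem ha hb
    zero_mem' := (s.star _).zero_mem
    smul_mem' := by
      intro t x hx
      have hrE : E.restrictScalars D ≠ ⊥ := fun h =>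
        hE ((Submodule.restrictScalars_eq_bot_iff D ↥T K).mp h)
      by_cases ht : (t : K) = 0
      · have h0 : t • x = 0 := by simp [Subalgebra.smul_def, ht]
        rw [h0]; exact (s.star _).zero_mem
      · have key : s.star ((E.restrictScalars D).map (LinearMap.mul D K (t : K)))
            ≤ s.star (E.restrictScalars D) :=
          s.star_mono _ _ (map_mul_ne_bot hrE ht) hrE (map_mul_le T E t)
        have : t • x ∈ ((s.star (E.restrictScalars D)).map (LinearMap.mul D K (t : K)) :
            Submodule D K) := by
          rw [Subalgebra.smul_def]
          exact Submodule.mem_map.mpr ⟨x, hx, rfl⟩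
        rw [← s.star_smul _ ht _ hrE] at this
        exact key this }

lemma inducedStar_restrict {E : Submodule ↥T K} (hE : E ≠ ⊥) :
    (inducedStar T s E).restrictScalars D = s.star (E.restrictScalars D) := by
  rw [inducedStar, dif_neg hE]
  rfl

lemma inducedStar_ne_bot {E : Submodule ↥T K} (hE : E ≠ ⊥) : inducedStar T s E ≠ ⊥ := by
  intro h
  apply hE
  have hrE : E.restrictScalars D ≠ ⊥ := fun h' =>
    hE ((Submodule.restrictScalars_eq_bot_iff D ↥T K).mp h')
  have h1 : E.restrictScalars D ≤ (inducedStar T s E).restrictScalars D := by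
    rw [inducedStar_restrict T s hE]; exact s.le_star _ hrE
  rw [h] at h1
  exact absurd (le_bot_iff.mp h1) hrE

lemma restrict_map_mul (E : Submodule ↥T K) (x : K) :
    (E.map (LinearMap.mul ↥T K x)).restrictScalars D
      = (E.restrictScalars D).map (LinearMap.mul D K x) := by
  ext y
  simp only [Submodule.restrictScalars_mem, Submodule.mem_map]
  constructor
  · rintro ⟨e, he, rfl⟩; exact ⟨e, he, rfl⟩
  · rintro ⟨e, he, rfl⟩; exact ⟨e, he, rfl⟩

noncomputable def induced : SemistarOperation ↥T K where
  star := inducedStar T s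
  star_smul := by
    intro x hx E hE
    have hmap : E.map (LinearMap.mul ↥T K x) ≠ ⊥ := by
      intro h
      apply map_mul_ne_bot (E := E.restrictScalars D)
        (fun h' => hE ((Submodule.restrictScalars_eq_bot_iff D ↥T K).mp h')) hx
      rw [← restrict_map_mul, h]
      rfl
    apply Submodule.restrictScalars_injective D ↥T K
    rw [inducedStar_restrict T s hmap, restrict_map_mul, restrict_map_mul,
      inducedStar_restrict T s hE]
    exact s.star_smul x hx _ (fun h' => hE ((Submodule.restrictScalars_eq_bot_iff D ↥T K).mp h'))
  star_mono := by
    intro E F hE hF hEF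
    have : (inducedStar T s E).restrictScalars D ≤ (inducedStar T s F).restrictScalars D := by
      rw [inducedStar_restrict T s hE, inducedStar_restrict T s hF]
      exact s.star_mono _ _ (fun h' => hE ((Submodule.restrictScalars_eq_bot_iff D ↥T K).mp h'))
        (fun h' => hF ((Submodule.restrictScalars_eq_bot_iff D ↥T K).mp h')) hEF
    exact this
  le_star := by
    intro E hE
    have : E.restrictScalars D ≤ (inducedStar T s E).restrictScalars D := by
      rw [inducedStar_restrict T s hE]
      exact s.le_star _ (fun h' => hE ((Submodule.restrictScalars_eq_bot_iff D ↥T K).mp h'))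
    exact this
  star_idem := by
    intro E hE
    apply Submodule.restrictScalars_injective D ↥T K
    rw [inducedStar_restrict T s (inducedStar_ne_bot T s hE), inducedStar_restrict T s hE]
    exact s.star_idem _ (fun h' => hE ((Submodule.restrictScalars_eq_bot_iff D ↥T K).mp h'))


lemma rs_ne_bot {E : Submodule ↥T K} (hE : E ≠ ⊥) : E.restrictScalars D ≠ ⊥ :=
  fun h' => hE ((Submodule.restrictScalars_eq_bot_iff D ↥T K).mp h')

lemma one_ne_bot' {R : Type*} [CommRing R] [Algebra R K] : (1 : Submodule R K) ≠ ⊥ := by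
  intro h
  have h1 : (1 : K) ∈ (1 : Submodule R K) := Submodule.one_le.mp le_rfl
  rw [h, Submodule.mem_bot] at h1
  exact one_ne_zero h1

lemma starF_le {R : Type*} [CommRing R] [Algebra R K] (s' : SemistarOperation R K)
    (E : Submodule R K) (hE : E ≠ ⊥) : starF s' E ≤ s'.star E :=
  iSup_le fun F => iSup_le fun hF => s'.star_mono F E hF.2.1 hE hF.1

lemma restrict_one : (1 : Submodule ↥T K).restrictScalars D = Subalgebra.toSubmodule T := by
  ext x
  simp only [Submodule.restrictScalars_mem, Submodule.one_eq_range, LinearMap.mem_range,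
    Algebra.linearMap_apply, Subalgebra.mem_toSubmodule]
  constructor
  · rintro ⟨t, rfl⟩
    exact t.2
  · intro hx
    exact ⟨⟨x, hx⟩, rfl⟩

lemma induced_one (hT : Subalgebra.toSubmodule T = s.star 1) : (induced T s).star 1 = 1 := by
  apply Submodule.restrictScalars_injective D ↥T K
  have h1 : (induced T s).star (1 : Submodule ↥T K) = inducedStar T s 1 := rfl
  rw [h1, inducedStar_restrict T s one_ne_bot', restrict_one, hT,
    s.star_idem 1 one_ne_bot', ← hT]

lemma induced_stable (h : IsStableOp s) : IsStableOp (induced T s) := by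
  intro E F hE hF hEF
  apply Submodule.restrictScalars_injective D ↥T K
  have key : ((induced T s).star E ⊓ (induced T s).star F).restrictScalars D
      = ((induced T s).star E).restrictScalars D ⊓ ((induced T s).star F).restrictScalars D := rfl
  have key2 : (E ⊓ F).restrictScalars D = E.restrictScalars D ⊓ F.restrictScalars D := rfl
  show (inducedStar T s (E ⊓ F)).restrictScalars D = _
  rw [inducedStar_restrict T s hEF, key]
  show _ = (inducedStar T s E).restrictScalars D ⊓ (inducedStar T s F).restrictScalars D
  rw [inducedStar_restrict T s hE, inducedStar_restrict T s hF, key2]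
  exact h _ _ (rs_ne_bot T hE) (rs_ne_bot T hF) (by rw [← key2]; exact rs_ne_bot T hEF)

lemma induced_finite (h : IsFiniteTypeOp s) : IsFiniteTypeOp (induced T s) := by
  intro E hE
  apply le_antisymm _ (starF_le _ E hE)
  intro x hx
  have hx' : x ∈ s.star (E.restrictScalars D) := by
    rw [← inducedStar_restrict T s hE]; exact hx
  rw [h _ (rs_ne_bot T hE)] at hx'
  have key : starF s (E.restrictScalars D) ≤ (starF (induced T s) E).restrictScalars D := by
    apply iSup_le; intro F; apply iSup_le; rintro ⟨hFE, hFne, hFfg⟩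
    set G : Submodule ↥T K := Submodule.span ↥T (F : Set K) with hGdef
    have hFG : F ≤ G.restrictScalars D := fun y hy => Submodule.subset_span hy
    have hGE : G ≤ E := Submodule.span_le.mpr (fun y hy => hFE hy)
    have hGne : G ≠ ⊥ := by
      intro h'
      apply hFne
      rw [← le_bot_iff]
      refine le_trans hFG ?_
      rw [h']
      exact le_rfl
    have hGfg : G.FG := by
      obtain ⟨S, hS⟩ := hFfg
      refine ⟨S, ?_⟩
      rw [hGdef, ← hS]
      exact (Submodule.span_span_of_tower D ↥T (S : Set K)).symm
    have h1 : s.star F ≤ s.star (G.restrictScalars D) :=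
      s.star_mono F _ hFne (rs_ne_bot T hGne) hFG
    have h2 : (induced T s).star G ≤ starF (induced T s) E :=
      le_iSup₂ (f := fun (F : Submodule ↥T K) (_ : F ≤ E ∧ F ≠ ⊥ ∧ F.FG) => (induced T s).star F)
        G ⟨hGE, hGne, hGfg⟩
    refine le_trans h1 ?_
    rw [← inducedStar_restrict T s hGne]
    exact fun y hy => h2 hy
  exact key hx'

end InducedStarAux

end Induced

variable {D K : Type*} [CommRing D] [IsDomain D] [Field K] [Algebra D K] [IsFractionRing D K]

theorem stmt12 (T : Subalgebra D K) (s : SemistarOperation D K) :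
    ∃ sι : SemistarOperation (↥T) K,
      (∀ E : Submodule (↥T) K, E ≠ ⊥ →
        Submodule.restrictScalars D (sι.star E) = s.star (Submodule.restrictScalars D E)) ∧
      (IsFiniteTypeOp s → IsFiniteTypeOp sι) ∧
      (Subalgebra.toSubmodule T = s.star 1 → sι.star 1 = 1) ∧
      (IsStableOp s → IsStableOp sι) := by
  refine ⟨InducedStarAux.induced T s, ?_, InducedStarAux.induced_finite T s,
    InducedStarAux.induced_one T s, InducedStarAux.induced_stable T s⟩
  intro E hE
  exact InducedStarAux.inducedStar_restrict T s hE
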